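/- Let H be an n×n complex matrix, and suppose v_0, …, v_{n−1} ∈ ℂⁿ satisfy Hᴴ v_k = E_k v_k with E_k ∈ ℝ for each k, and let κ_0, …, κ_{n−1} be nonzero real numbers. Define Θ = Σ_{k} κ_k² · v_k v_kᴴ (the sum of the rank-one matrices κ_k² v_k (v_k)ᴴ). Then Θ is Hermitian, Θ satisfies the intertwining relation Hᴴ Θ = Θ H, and if moreover the vectors v_0, …, v_{n−1} form a basis of ℂⁿ then Θ is positive definite. -/

import Mathlib

open Matrix ComplexOrder

section Aux

variable {n : ℕ}

lemma aux_mul_vecMulVec (M : Matrix (Fin n) (Fin n) ℂ) (a b : Fin n → ℂ) :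
    M * vecMulVec a b = vecMulVec (M *ᵥ a) b := by
  ext i j
  simp only [vecMulVec_apply, Matrix.mul_apply, mulVec, dotProduct, Finset.sum_mul,
    Finset.mul_sum]
  apply Finset.sum_congr rfl; intros; ring

lemma aux_vecMulVec_mul (M : Matrix (Fin n) (Fin n) ℂ) (a b : Fin n → ℂ) :
    vecMulVec a b * M = vecMulVec a (b ᵥ* M) := by
  ext i j
  simp [vecMulVec_apply, Matrix.mul_apply, vecMul, dotProduct, Finset.mul_sum, mul_assoc]

lemma aux_dot_vecMulVec (x a b : Fin n → ℂ) :
    dotProduct (star x) (vecMulVec a b *ᵥ x) = (dotProduct (star x) a) * (dotProduct b x) := by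
  simp only [dotProduct, mulVec, vecMulVec_apply, Finset.mul_sum, Finset.sum_mul]
  rw [Finset.sum_comm]
  apply Finset.sum_congr rfl; intros
  apply Finset.sum_congr rfl; intros
  ring

lemma aux_smul_vecMulVec (c : ℂ) (a b : Fin n → ℂ) :
    vecMulVec (c • a) b = c • vecMulVec a b := by
  ext i j; simp [vecMulVec_apply, mul_assoc]

lemma aux_vecMulVec_smul (c : ℂ) (a b : Fin n → ℂ) :
    vecMulVec a (c • b) = c • vecMulVec a b := by
  ext i j; simp [vecMulVec_apply]; ring

lemma aux_sum_mulVec (f : Fin n → Matrix (Fin n) (Fin n) ℂ) (x : Fin n → ℂ) :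
    (∑ k, f k) *ᵥ x = ∑ k, f k *ᵥ x := by
  ext i
  simp only [mulVec, dotProduct, Matrix.sum_apply, Finset.sum_mul, Finset.sum_apply]
  exact Finset.sum_comm

lemma aux_dot_sum (w : Fin n → ℂ) (f : Fin n → (Fin n → ℂ)) :
    dotProduct w (∑ k, f k) = ∑ k, dotProduct w (f k) := by
  simp only [dotProduct, Finset.sum_apply, Finset.mul_sum]
  exact Finset.sum_comm

end Aux

theorem spectral_expansion_metric
    (n : ℕ) (H : Matrix (Fin n) (Fin n) ℂ)
    (v : Fin n → (Fin n → ℂ)) (E : Fin n → ℝ) (κ : Fin n → ℝ)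
    (hκ : ∀ k, κ k ≠ 0)
    (hv : ∀ k, Hᴴ *ᵥ v k = ((E k : ℂ)) • v k)
    (Θ : Matrix (Fin n) (Fin n) ℂ)
    (hΘ : Θ = ∑ k, (((κ k) ^ 2 : ℝ) : ℂ) •
      Matrix.vecMulVec (v k) (fun j => (starRingEnd ℂ) (v k j))) :
    Θ.IsHermitian ∧ Hᴴ * Θ = Θ * H ∧
      ((LinearIndependent ℂ v ∧ Submodule.span ℂ (Set.range v) = ⊤) →
        Θ.PosDef) := by
  have hvstar : ∀ k, (fun j => (starRingEnd ℂ) (v k j)) = star (v k) := fun _ => rfl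
  -- Hermitian
  have hherm : Θ.IsHermitian := by
    rw [hΘ]
    unfold Matrix.IsHermitian
    ext i j
    simp only [conjTranspose_apply, Matrix.sum_apply, Matrix.smul_apply, vecMulVec_apply,
      smul_eq_mul, star_sum, star_mul']
    apply Finset.sum_congr rfl; intro k _
    simp [Complex.conj_ofReal, mul_comm, mul_left_comm]
  refine ⟨hherm, ?_, ?_⟩
  · -- intertwining
    rw [hΘ, Finset.mul_sum, Finset.sum_mul]
    apply Finset.sum_congr rfl; intro k _
    rw [mul_smul_comm, smul_mul_assoc, hvstar, aux_mul_vecMulVec, aux_vecMulVec_mul, hv]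
    have hb : star (v k) ᵥ* H = (E k : ℂ) • star (v k) := by
      have := congrArg star (hv k)
      rw [star_mulVec, conjTranspose_conjTranspose] at this
      rw [this, star_smul]
      simp
    rw [hb, aux_smul_vecMulVec, aux_vecMulVec_smul]
  · rintro ⟨_, hspan⟩
    refine posDef_iff_dotProduct_mulVec.mpr ⟨hherm, fun x hx => ?_⟩
    -- key: existence of k with star (v k) ⬝ᵥ x ≠ 0
    have hex : ∃ k, dotProduct (star (v k)) x ≠ 0 := by
      by_contra hall
      push_neg at hall
      have hx0 : ∀ y ∈ Submodule.span ℂ (Set.range v), dotProduct y (star x) = 0 := by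
        intro y hy
        induction hy using Submodule.span_induction with
        | mem y hy =>
          obtain ⟨k, rfl⟩ := hy
          have := congrArg star (hall k)
          simpa [dotProduct, star_sum, mul_comm] using this
        | zero => simp
        | add a b _ _ ha hb => simp [add_dotProduct, ha, hb]
        | smul c a _ ha => simp [smul_dotProduct, ha]
      have := hx0 x (by rw [hspan]; trivial)
      have hxx : dotProduct (star x) x = 0 := by
        have h2 := congrArg star this
        simpa [dotProduct, star_sum, mul_comm] using h2
      exact hx (dotProduct_star_self_eq_zero.mp hxx)
    obtain ⟨k₀, hk₀⟩ := hex
    rw [hΘ]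
    rw [aux_sum_mulVec, aux_dot_sum]
    have hterm : ∀ k, dotProduct (star x)
        (((((κ k) ^ 2 : ℝ) : ℂ) • vecMulVec (v k) fun j => (starRingEnd ℂ) (v k j)) *ᵥ x)
        = (((κ k) ^ 2 * Complex.normSq (dotProduct (star (v k)) x) : ℝ) : ℂ) := by
      intro k
      rw [smul_mulVec, dotProduct_smul, hvstar, aux_dot_vecMulVec]
      have hconj : dotProduct (star x) (v k) = (starRingEnd ℂ) (dotProduct (star (v k)) x) := by
        simp [dotProduct, map_sum, mul_comm]
      rw [hconj]
      push_cast
      rw [Complex.normSq_eq_conj_mul_self, smul_eq_mul]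
    apply Finset.sum_pos' ?_ ⟨k₀, Finset.mem_univ k₀, ?_⟩
    · intro k _
      rw [hterm k]
      rw [Complex.zero_le_real]
      exact mul_nonneg (sq_nonneg _) (Complex.normSq_nonneg _)
    · rw [hterm k₀, Complex.zero_lt_real]
      have : Complex.normSq (dotProduct (star (v k₀)) x) > 0 := by
        simpa [Complex.normSq_pos] using hk₀
      have hκ2 : 0 < (κ k₀) ^ 2 := pow_two_pos_of_ne_zero (hκ k₀)
      exact mul_pos hκ2 this
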